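/- arXiv:1912.04933 — 3 statements merged into one kernel-verified Lean document; each statement's English description precedes it below -/
import Mathlib

section
/- Suppose S = {s_1 < ⋯ < s_r} is an n-admissible set. Let S_1 = S ∖ {s_r}, k = s_r − 1, and S_2 = S_1 ∪ {k}. Then P_S(n,q) = [n choose k]_q · P_{S_1}(k,q) · (−q;q)_{n−k−1} − P_{S_1}(n,q) − P_{S_2}(n,q). -/
open Polynomial Finset

noncomputable section

/-- The number of inversions (the Coxeter length) of a permutation of `Fin n`. -/
def invNum {n : ℕ} (π : Equiv.Perm (Fin n)) : ℕ :=
  (Finset.univ.filter fun p : Fin n × Fin n => p.1 < p.2 ∧ π p.2 < π p.1).card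

/-- The descent set of a permutation, as a set of positive integers (1-indexed positions):
`i ∈ Des(π)` iff `1 ≤ i ≤ n-1` and `π_i > π_{i+1}` in one-line notation. -/
def DesSet {n : ℕ} (π : Equiv.Perm (Fin n)) : Finset ℕ :=
  (Finset.univ.filter fun a : Fin n => ∃ b : Fin n, (a : ℕ) + 1 = (b : ℕ) ∧ π b < π a).image
    fun a : Fin n => (a : ℕ) + 1

/-- The peak set of a permutation (1-indexed positions):
`i ∈ Peak(π)` iff `2 ≤ i ≤ n-1` and `π_{i-1} < π_i > π_{i+1}` in one-line notation. -/
def PeakSet {n : ℕ} (π : Equiv.Perm (Fin n)) : Finset ℕ :=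
  (Finset.univ.filter fun b : Fin n =>
      ∃ a c : Fin n, (a : ℕ) + 1 = (b : ℕ) ∧ (b : ℕ) + 1 = (c : ℕ) ∧ π a < π b ∧ π c < π b).image
    fun b : Fin n => (b : ℕ) + 1

/-- The q-integer `[j]_q = 1 + q + ⋯ + q^(j-1)`. -/
def qNum (j : ℕ) : Polynomial ℝ := ∑ i ∈ Finset.range j, X ^ i

/-- The q-factorial `[n]!_q = [1]_q [2]_q ⋯ [n]_q`. -/
def qFactorial : ℕ → Polynomial ℝ
  | 0 => 1
  | n + 1 => qFactorial n * qNum (n + 1)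

/-- The q-binomial coefficient `[n choose k]_q = [n]!_q / ([k]!_q [n-k]!_q)`.
(The divisor is monic and the division is exact, so `divByMonic` gives the true quotient.) -/
def qBinom (n k : ℕ) : Polynomial ℝ :=
  qFactorial n /ₘ (qFactorial k * qFactorial (n - k))

/-- `(−q;q)_k = (1+q)(1+q²)⋯(1+q^k)`. -/
def qPoch (k : ℕ) : Polynomial ℝ := ∏ i ∈ Finset.range k, (1 + X ^ (i + 1))

/-- `D_S(n,q) = Σ_{π ∈ 𝔖_n, Des(π) = S} q^{ℓ(π)}`. -/
def Dpoly (S : Finset ℕ) (n : ℕ) : Polynomial ℝ :=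
  ∑ π ∈ Finset.univ.filter (fun π : Equiv.Perm (Fin n) => DesSet π = S), X ^ invNum π

/-- `P_S(n,q) = Σ_{π ∈ 𝔖_n, Peak(π) = S} q^{ℓ(π)}`. -/
def Ppoly (S : Finset ℕ) (n : ℕ) : Polynomial ℝ :=
  ∑ π ∈ Finset.univ.filter (fun π : Equiv.Perm (Fin n) => PeakSet π = S), X ^ invNum π

/-- `Q_S(n,q) = Σ_{π ∈ 𝔖_n, Peak(π) ⊇ S} q^{ℓ(π)}`. -/
def Qpoly (S : Finset ℕ) (n : ℕ) : Polynomial ℝ :=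
  ∑ π ∈ Finset.univ.filter (fun π : Equiv.Perm (Fin n) => S ⊆ PeakSet π), X ^ invNum π

/-- The sequence `(a i)` for `lo ≤ i ≤ hi` is strongly q-log concave: it has no internal
zeroes and `a i * a j - a (i-1) * a (j+1)` has nonnegative coefficients for `lo < i ≤ j < hi`. -/
def StronglyQLogConcave (lo hi : ℕ) (a : ℕ → Polynomial ℝ) : Prop :=
  (∀ i j l : ℕ, lo ≤ i → i < j → j < l → l ≤ hi → a i ≠ 0 → a l ≠ 0 → a j ≠ 0) ∧
  ∀ i j : ℕ, lo < i → i ≤ j → j < hi → ∀ m : ℕ,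
    0 ≤ (a i * a j - a (i - 1) * a (j + 1)).coeff m



namespace Aux

lemma mem_peakSet {n : ℕ} {π : Equiv.Perm (Fin n)} {x : ℕ} :
    x ∈ PeakSet π ↔ ∃ a b c : Fin n, (a : ℕ) + 1 = (b : ℕ) ∧ (b : ℕ) + 1 = (c : ℕ) ∧
      π a < π b ∧ π c < π b ∧ x = (b : ℕ) + 1 := by
  unfold PeakSet
  rw [Finset.mem_image]
  constructor
  · rintro ⟨b, hb, hx⟩
    rw [Finset.mem_filter] at hb
    obtain ⟨a, c, h1, h2, h3, h4⟩ := hb.2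
    exact ⟨a, b, c, h1, h2, h3, h4, hx.symm⟩
  · rintro ⟨a, b, c, h1, h2, h3, h4, h5⟩
    exact ⟨b, Finset.mem_filter.2 ⟨Finset.mem_univ _, a, c, h1, h2, h3, h4⟩, h5.symm⟩

lemma peak_two_le {n : ℕ} {π : Equiv.Perm (Fin n)} {x : ℕ} (h : x ∈ PeakSet π) : 2 ≤ x := by
  obtain ⟨a, b, c, h1, _, _, _, h5⟩ := mem_peakSet.1 h; omega

lemma peak_add_one_le {n : ℕ} {π : Equiv.Perm (Fin n)} {x : ℕ} (h : x ∈ PeakSet π) : x + 1 ≤ n := by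
  obtain ⟨a, b, c, h1, h2, _, _, h5⟩ := mem_peakSet.1 h
  have := c.isLt; omega

lemma peak_not_adjacent {n : ℕ} {π : Equiv.Perm (Fin n)} {x : ℕ}
    (h : x ∈ PeakSet π) (h' : x + 1 ∈ PeakSet π) : False := by
  obtain ⟨a, b, c, h1, h2, h3, h4, h5⟩ := mem_peakSet.1 h
  obtain ⟨a', b', c', g1, g2, g3, g4, g5⟩ := mem_peakSet.1 h'
  have hb : b' = c := Fin.ext (by omega)
  have ha : a' = b := Fin.ext (by omega)
  subst hb ha
  exact absurd g3 (not_lt.2 h4.le)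

section Encode
open Equiv

variable {k m : ℕ}

lemma compl_card {A : Finset (Fin (k + m))} (hA : A.card = k) : Aᶜ.card = m := by
  rw [Finset.card_compl, Fintype.card_fin, hA]; omega

/-- values of first block in increasing order -/
def embA (A : Finset (Fin (k + m))) (hA : A.card = k) : Fin k ↪o Fin (k + m) :=
  A.orderEmbOfFin hA

def embB (A : Finset (Fin (k + m))) (hA : A.card = k) : Fin m ↪o Fin (k + m) :=
  Aᶜ.orderEmbOfFin (compl_card hA)

def encodeFun (A : Finset (Fin (k + m))) (hA : A.card = k)
    (σ : Perm (Fin k)) (τ : Perm (Fin m)) : Fin (k + m) → Fin (k + m) :=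
  fun x => Fin.addCases (fun i => embA A hA (σ i)) (fun j => embB A hA (τ j)) x

lemma encodeFun_castAdd (A : Finset (Fin (k + m))) (hA : A.card = k)
    (σ : Perm (Fin k)) (τ : Perm (Fin m)) (i : Fin k) :
    encodeFun A hA σ τ (Fin.castAdd m i) = embA A hA (σ i) := by
  simp [encodeFun]

lemma encodeFun_natAdd (A : Finset (Fin (k + m))) (hA : A.card = k)
    (σ : Perm (Fin k)) (τ : Perm (Fin m)) (j : Fin m) :
    encodeFun A hA σ τ (Fin.natAdd k j) = embB A hA (τ j) := by
  simp [encodeFun]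

lemma embA_mem (A : Finset (Fin (k + m))) (hA : A.card = k) (i : Fin k) :
    embA A hA i ∈ A := Finset.orderEmbOfFin_mem _ _ _

lemma embB_not_mem (A : Finset (Fin (k + m))) (hA : A.card = k) (j : Fin m) :
    embB A hA j ∉ A := by
  have := Finset.orderEmbOfFin_mem Aᶜ (compl_card hA) j
  rw [Finset.mem_compl] at this
  exact this

lemma encodeFun_injective (A : Finset (Fin (k + m))) (hA : A.card = k)
    (σ : Perm (Fin k)) (τ : Perm (Fin m)) : Function.Injective (encodeFun A hA σ τ) := by
  intro x y h
  induction x using Fin.addCases with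
  | left i =>
    induction y using Fin.addCases with
    | left i' =>
      rw [encodeFun_castAdd, encodeFun_castAdd] at h
      have := (embA A hA).injective h
      rw [σ.injective this]
    | right j' =>
      rw [encodeFun_castAdd, encodeFun_natAdd] at h
      exact absurd (h ▸ embA_mem A hA (σ i)) (embB_not_mem A hA (τ j'))
  | right j =>
    induction y using Fin.addCases with
    | left i' =>
      rw [encodeFun_natAdd, encodeFun_castAdd] at h
      exact absurd (h.symm ▸ embA_mem A hA (σ i')) (embB_not_mem A hA (τ j))
    | right j' =>
      rw [encodeFun_natAdd, encodeFun_natAdd] at h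
      have := (embB A hA).injective h
      rw [τ.injective this]

def encodePerm (A : Finset (Fin (k + m))) (hA : A.card = k)
    (σ : Perm (Fin k)) (τ : Perm (Fin m)) : Perm (Fin (k + m)) :=
  Equiv.ofBijective _ (Finite.injective_iff_bijective.1 (encodeFun_injective A hA σ τ))

lemma encodePerm_castAdd (A : Finset (Fin (k + m))) (hA : A.card = k)
    (σ : Perm (Fin k)) (τ : Perm (Fin m)) (i : Fin k) :
    encodePerm A hA σ τ (Fin.castAdd m i) = embA A hA (σ i) :=
  encodeFun_castAdd A hA σ τ i

lemma encodePerm_natAdd (A : Finset (Fin (k + m))) (hA : A.card = k)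
    (σ : Perm (Fin k)) (τ : Perm (Fin m)) (j : Fin m) :
    encodePerm A hA σ τ (Fin.natAdd k j) = embB A hA (τ j) :=
  encodeFun_natAdd A hA σ τ j

end Encode
section Inv
open Equiv

variable {k m : ℕ}

def invSet {n : ℕ} (π : Perm (Fin n)) : Finset (Fin n × Fin n) :=
  Finset.univ.filter fun p => p.1 < p.2 ∧ π p.2 < π p.1

lemma invNum_eq {n : ℕ} (π : Perm (Fin n)) : invNum π = (invSet π).card := rfl

def crossNum {n : ℕ} (A : Finset (Fin n)) : ℕ :=
  ((A ×ˢ Aᶜ).filter fun p => p.2 < p.1).card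

def crossPos (A : Finset (Fin (k + m))) (hA : A.card = k)
    (σ : Perm (Fin k)) (τ : Perm (Fin m)) : Finset (Fin k × Fin m) :=
  Finset.univ.filter fun p => embB A hA (τ p.2) < embA A hA (σ p.1)

lemma embA_lt_embA {A : Finset (Fin (k + m))} (hA : A.card = k) {x y : Fin k} :
    embA A hA x < embA A hA y ↔ x < y := (embA A hA).lt_iff_lt

lemma embB_lt_embB {A : Finset (Fin (k + m))} (hA : A.card = k) {x y : Fin m} :
    embB A hA x < embB A hA y ↔ x < y := (embB A hA).lt_iff_lt

lemma castAdd_lt_castAdd {i i' : Fin k} : Fin.castAdd m i < Fin.castAdd m i' ↔ i < i' := Iff.rfl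

lemma natAdd_lt_natAdd {j j' : Fin m} : Fin.natAdd k j < Fin.natAdd k j' ↔ j < j' := by
  simp only [Fin.lt_def, Fin.coe_natAdd]; omega

lemma castAdd_lt_natAdd {i : Fin k} {j : Fin m} : Fin.castAdd m i < Fin.natAdd k j := by
  simp only [Fin.lt_def, Fin.coe_castAdd, Fin.coe_natAdd]
  omega

lemma castAdd_injective : Function.Injective (Fin.castAdd (n := k) m) := by
  intro a b h
  have := congrArg Fin.val h
  simp only [Fin.coe_castAdd] at this
  exact Fin.ext this

lemma natAdd_injective : Function.Injective (Fin.natAdd (m := m) k) := by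
  intro a b h
  have := congrArg Fin.val h
  simp only [Fin.coe_natAdd] at this
  exact Fin.ext (by omega)

lemma invSet_encode (A : Finset (Fin (k + m))) (hA : A.card = k)
    (σ : Perm (Fin k)) (τ : Perm (Fin m)) :
    invSet (encodePerm A hA σ τ) =
      ((invSet σ).image fun p => (Fin.castAdd m p.1, Fin.castAdd m p.2)) ∪
      ((invSet τ).image fun p => (Fin.natAdd k p.1, Fin.natAdd k p.2)) ∪
      ((crossPos A hA σ τ).image fun p => (Fin.castAdd m p.1, Fin.natAdd k p.2)) := by
  ext ⟨x, y⟩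
  simp only [invSet, crossPos, Finset.mem_union, Finset.mem_image, Finset.mem_filter,
    Finset.mem_univ, true_and, Prod.mk.injEq, Prod.exists]
  induction x using Fin.addCases with
  | left i =>
    induction y using Fin.addCases with
    | left i' =>
      rw [encodePerm_castAdd, encodePerm_castAdd]
      constructor
      · rintro ⟨h1, h2⟩
        exact Or.inl (Or.inl ⟨i, i', ⟨castAdd_lt_castAdd.1 h1, (embA_lt_embA hA).1 h2⟩, rfl, rfl⟩)
      · rintro ((⟨a, b, ⟨g1, g2⟩, e1, e2⟩ | ⟨a, b, _, e1, _⟩) | ⟨a, b, _, _, e2⟩)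
        · obtain rfl := castAdd_injective e1; obtain rfl := castAdd_injective e2
          exact ⟨castAdd_lt_castAdd.2 g1, (embA_lt_embA hA).2 g2⟩
        · exact absurd (congrArg Fin.val e1) (by simp [Fin.coe_natAdd, Fin.coe_castAdd]; omega)
        · exact absurd (congrArg Fin.val e2) (by simp [Fin.coe_natAdd, Fin.coe_castAdd]; omega)
    | right j' =>
      rw [encodePerm_castAdd, encodePerm_natAdd]
      constructor
      · rintro ⟨_, h2⟩
        exact Or.inr ⟨i, j', h2, rfl, rfl⟩
      · rintro ((⟨a, b, _, _, e2⟩ | ⟨a, b, _, e1, _⟩) | ⟨a, b, g, e1, e2⟩)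
        · exact absurd (congrArg Fin.val e2) (by simp [Fin.coe_natAdd, Fin.coe_castAdd]; omega)
        · exact absurd (congrArg Fin.val e1) (by simp [Fin.coe_natAdd, Fin.coe_castAdd]; omega)
        · obtain rfl := castAdd_injective e1; obtain rfl := natAdd_injective e2
          exact ⟨castAdd_lt_natAdd, g⟩
  | right j =>
    induction y using Fin.addCases with
    | left i' =>
      constructor
      · rintro ⟨h1, _⟩
        exact absurd h1 (by simp only [Fin.lt_def, Fin.coe_castAdd, Fin.coe_natAdd, not_lt]; omega)
      · rintro ((⟨a, b, _, e1, _⟩ | ⟨a, b, _, _, e2⟩) | ⟨a, b, _, e1, _⟩)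
        · exact absurd (congrArg Fin.val e1) (by simp [Fin.coe_natAdd, Fin.coe_castAdd]; omega)
        · exact absurd (congrArg Fin.val e2) (by simp [Fin.coe_natAdd, Fin.coe_castAdd]; omega)
        · exact absurd (congrArg Fin.val e1) (by simp [Fin.coe_natAdd, Fin.coe_castAdd]; omega)
    | right j' =>
      rw [encodePerm_natAdd, encodePerm_natAdd]
      constructor
      · rintro ⟨h1, h2⟩
        exact Or.inl (Or.inr ⟨j, j', ⟨natAdd_lt_natAdd.1 h1, (embB_lt_embB hA).1 h2⟩, rfl, rfl⟩)
      · rintro ((⟨a, b, _, e1, _⟩ | ⟨a, b, ⟨g1, g2⟩, e1, e2⟩) | ⟨a, b, _, e1, _⟩)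
        · exact absurd (congrArg Fin.val e1) (by simp [Fin.coe_natAdd, Fin.coe_castAdd]; omega)
        · obtain rfl := natAdd_injective e1; obtain rfl := natAdd_injective e2
          exact ⟨natAdd_lt_natAdd.2 g1, (embB_lt_embB hA).2 g2⟩
        · exact absurd (congrArg Fin.val e1) (by simp [Fin.coe_natAdd, Fin.coe_castAdd]; omega)

end Inv
section InvCard
open Equiv

variable {k m : ℕ}

lemma embA_surj {A : Finset (Fin (k + m))} (hA : A.card = k) {a : Fin (k + m)} (ha : a ∈ A) :
    ∃ i, embA A hA i = a := by
  have : a ∈ Set.range (A.orderEmbOfFin hA) := by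
    rw [Finset.range_orderEmbOfFin]; exact ha
  exact this

lemma embB_surj {A : Finset (Fin (k + m))} (hA : A.card = k) {a : Fin (k + m)} (ha : a ∉ A) :
    ∃ j, embB A hA j = a := by
  have : a ∈ Set.range (Aᶜ.orderEmbOfFin (compl_card hA)) := by
    rw [Finset.range_orderEmbOfFin]; exact Finset.mem_compl.2 ha
  exact this

lemma card_crossPos (A : Finset (Fin (k + m))) (hA : A.card = k)
    (σ : Perm (Fin k)) (τ : Perm (Fin m)) :
    (crossPos A hA σ τ).card = crossNum A := by
  apply Finset.card_bij (fun p _ => (embA A hA (σ p.1), embB A hA (τ p.2)))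
  · intro p hp
    simp only [crossPos, Finset.mem_filter, Finset.mem_univ, true_and] at hp
    simp only [crossNum, Finset.mem_filter, Finset.mem_product, Finset.mem_compl]
    exact ⟨⟨embA_mem A hA _, embB_not_mem A hA (τ p.2)⟩, hp⟩
  · intro p hp q hq h
    rw [Prod.mk.injEq] at h
    have e1 := σ.injective ((embA A hA).injective h.1)
    have e2 := τ.injective ((embB A hA).injective h.2)
    exact Prod.ext e1 e2
  · intro p hp
    simp only [crossNum, Finset.mem_filter, Finset.mem_product, Finset.mem_compl] at hp
    obtain ⟨⟨ha, hc⟩, hlt⟩ := hp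
    obtain ⟨i, hi⟩ := embA_surj hA ha
    obtain ⟨j, hj⟩ := embB_surj hA hc
    refine ⟨(σ.symm i, τ.symm j), ?_, ?_⟩
    · simp only [crossPos, Finset.mem_filter, Finset.mem_univ, true_and,
        Equiv.apply_symm_apply]
      rw [hi, hj]; exact hlt
    · simp only [Equiv.apply_symm_apply]
      rw [hi, hj]

lemma invNum_encode (A : Finset (Fin (k + m))) (hA : A.card = k)
    (σ : Perm (Fin k)) (τ : Perm (Fin m)) :
    invNum (encodePerm A hA σ τ) = invNum σ + invNum τ + crossNum A := by
  have inj1 : Function.Injective fun p : Fin k × Fin k =>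
      (Fin.castAdd m p.1, Fin.castAdd m p.2) := by
    intro p q h
    rw [Prod.mk.injEq] at h
    exact Prod.ext (castAdd_injective h.1) (castAdd_injective h.2)
  have inj2 : Function.Injective fun p : Fin m × Fin m =>
      (Fin.natAdd k p.1, Fin.natAdd k p.2) := by
    intro p q h
    rw [Prod.mk.injEq] at h
    exact Prod.ext (natAdd_injective h.1) (natAdd_injective h.2)
  have inj3 : Function.Injective fun p : Fin k × Fin m =>
      (Fin.castAdd m p.1, Fin.natAdd k p.2) := by
    intro p q h
    rw [Prod.mk.injEq] at h
    exact Prod.ext (castAdd_injective h.1) (natAdd_injective h.2)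
  have d12 : Disjoint ((invSet σ).image fun p => (Fin.castAdd m p.1, Fin.castAdd m p.2))
      ((invSet τ).image fun p => (Fin.natAdd k p.1, Fin.natAdd k p.2)) := by
    rw [Finset.disjoint_left]
    rintro z h1 h2
    obtain ⟨p, _, hp⟩ := Finset.mem_image.1 h1
    obtain ⟨q, _, hq⟩ := Finset.mem_image.1 h2
    have := congrArg (fun w => (Prod.snd w : Fin (k + m)).val) (hp.trans hq.symm)
    simp only [Fin.coe_castAdd, Fin.coe_natAdd] at this
    have := p.2.isLt
    omega
  have d13 : Disjoint ((invSet σ).image fun p => (Fin.castAdd m p.1, Fin.castAdd m p.2))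
      ((crossPos A hA σ τ).image fun p => (Fin.castAdd m p.1, Fin.natAdd k p.2)) := by
    rw [Finset.disjoint_left]
    rintro z h1 h2
    obtain ⟨p, _, hp⟩ := Finset.mem_image.1 h1
    obtain ⟨q, _, hq⟩ := Finset.mem_image.1 h2
    have := congrArg (fun w => (Prod.snd w : Fin (k + m)).val) (hp.trans hq.symm)
    simp only [Fin.coe_castAdd, Fin.coe_natAdd] at this
    have := p.2.isLt
    omega
  have d23 : Disjoint ((invSet τ).image fun p => (Fin.natAdd k p.1, Fin.natAdd k p.2))
      ((crossPos A hA σ τ).image fun p => (Fin.castAdd m p.1, Fin.natAdd k p.2)) := by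
    rw [Finset.disjoint_left]
    rintro z h1 h2
    obtain ⟨p, _, hp⟩ := Finset.mem_image.1 h1
    obtain ⟨q, _, hq⟩ := Finset.mem_image.1 h2
    have := congrArg (fun w => (Prod.fst w : Fin (k + m)).val) (hp.trans hq.symm)
    simp only [Fin.coe_castAdd, Fin.coe_natAdd] at this
    have := q.1.isLt
    omega
  rw [invNum_eq, invSet_encode A hA σ τ,
    Finset.card_union_of_disjoint (Finset.disjoint_union_left.2 ⟨d13, d23⟩),
    Finset.card_union_of_disjoint d12,
    Finset.card_image_of_injective _ inj1, Finset.card_image_of_injective _ inj2,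
    Finset.card_image_of_injective _ inj3, card_crossPos A hA σ τ]
  rfl

end InvCard
section Decode
open Equiv

variable {k m : ℕ}

def blockSet (π : Perm (Fin (k + m))) : Finset (Fin (k + m)) :=
  Finset.univ.image fun i : Fin k => π (Fin.castAdd m i)

lemma blockSet_card (π : Perm (Fin (k + m))) : (blockSet π).card = k := by
  rw [blockSet, Finset.card_image_of_injective _
      (show Function.Injective fun i : Fin k => π (Fin.castAdd m i) from
        fun a b h => castAdd_injective (π.injective h)),
    Finset.card_univ, Fintype.card_fin]

lemma mem_blockSet (π : Perm (Fin (k + m))) (i : Fin k) :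
    π (Fin.castAdd m i) ∈ blockSet π :=
  Finset.mem_image_of_mem _ (Finset.mem_univ i)

lemma not_mem_blockSet (π : Perm (Fin (k + m))) (j : Fin m) :
    π (Fin.natAdd k j) ∉ blockSet π := by
  intro h
  obtain ⟨i, _, hi⟩ := Finset.mem_image.1 h
  have := π.injective hi
  have := congrArg Fin.val this
  simp only [Fin.coe_castAdd, Fin.coe_natAdd] at this
  omega

def decSigma (π : Perm (Fin (k + m))) : Perm (Fin k) :=
  Equiv.ofBijective
    (fun i => ((blockSet π).orderIsoOfFin (blockSet_card π)).symm
      ⟨π (Fin.castAdd m i), mem_blockSet π i⟩)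
    (Finite.injective_iff_bijective.1 (by
      intro a b h
      have := congrArg (((blockSet π).orderIsoOfFin (blockSet_card π)) ·) h
      simp only [OrderIso.apply_symm_apply] at this
      have := congrArg Subtype.val this
      exact castAdd_injective (π.injective this)))

lemma embA_decSigma (π : Perm (Fin (k + m))) (i : Fin k) :
    embA (blockSet π) (blockSet_card π) (decSigma π i) = π (Fin.castAdd m i) := by
  rw [embA, decSigma]
  simp only [Equiv.ofBijective_apply]
  rw [← Finset.coe_orderIsoOfFin_apply, OrderIso.apply_symm_apply]

def decTau (π : Perm (Fin (k + m))) : Perm (Fin m) :=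
  Equiv.ofBijective
    (fun j => ((blockSet π)ᶜ.orderIsoOfFin (compl_card (blockSet_card π))).symm
      ⟨π (Fin.natAdd k j), Finset.mem_compl.2 (not_mem_blockSet π j)⟩)
    (Finite.injective_iff_bijective.1 (by
      intro a b h
      have := congrArg ((((blockSet π)ᶜ).orderIsoOfFin (compl_card (blockSet_card π))) ·) h
      simp only [OrderIso.apply_symm_apply] at this
      have := congrArg Subtype.val this
      exact natAdd_injective (π.injective this)))

lemma embB_decTau (π : Perm (Fin (k + m))) (j : Fin m) :
    embB (blockSet π) (blockSet_card π) (decTau π j) = π (Fin.natAdd k j) := by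
  rw [embB, decTau]
  simp only [Equiv.ofBijective_apply]
  rw [← Finset.coe_orderIsoOfFin_apply, OrderIso.apply_symm_apply]

lemma encode_decode (π : Perm (Fin (k + m))) :
    encodePerm (blockSet π) (blockSet_card π) (decSigma π) (decTau π) = π := by
  apply Equiv.ext
  intro x
  induction x using Fin.addCases with
  | left i => rw [encodePerm_castAdd, embA_decSigma]
  | right j => rw [encodePerm_natAdd, embB_decTau]

lemma blockSet_encode (A : Finset (Fin (k + m))) (hA : A.card = k)
    (σ : Perm (Fin k)) (τ : Perm (Fin m)) :
    blockSet (encodePerm A hA σ τ) = A := by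
  ext a
  simp only [blockSet, Finset.mem_image, Finset.mem_univ, true_and]
  constructor
  · rintro ⟨i, rfl⟩
    rw [encodePerm_castAdd]
    exact embA_mem A hA (σ i)
  · intro ha
    obtain ⟨i, hi⟩ := embA_surj hA ha
    exact ⟨σ.symm i, by rw [encodePerm_castAdd, Equiv.apply_symm_apply, hi]⟩

lemma embA_congr {A A' : Finset (Fin (k + m))} (h : A = A') (hA : A.card = k) (hA' : A'.card = k)
    (x : Fin k) : embA A hA x = embA A' hA' x := by subst h; rfl

lemma embB_congr {A A' : Finset (Fin (k + m))} (h : A = A') (hA : A.card = k) (hA' : A'.card = k)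
    (x : Fin m) : embB A hA x = embB A' hA' x := by subst h; rfl

lemma decSigma_encode (A : Finset (Fin (k + m))) (hA : A.card = k)
    (σ : Perm (Fin k)) (τ : Perm (Fin m)) :
    decSigma (encodePerm A hA σ τ) = σ := by
  apply Equiv.ext
  intro i
  apply (embA A hA).injective
  rw [← embA_congr (blockSet_encode A hA σ τ) (blockSet_card _) hA,
    embA_decSigma, encodePerm_castAdd]

lemma decTau_encode (A : Finset (Fin (k + m))) (hA : A.card = k)
    (σ : Perm (Fin k)) (τ : Perm (Fin m)) :
    decTau (encodePerm A hA σ τ) = τ := by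
  apply Equiv.ext
  intro j
  apply (embB A hA).injective
  rw [← embB_congr (blockSet_encode A hA σ τ) (blockSet_card _) hA,
    embB_decTau, encodePerm_natAdd]

end Decode
section KeySum
open Equiv

variable {k m : ℕ}

def encodeT (A : Finset (Fin (k + m))) (σ : Perm (Fin k)) (τ : Perm (Fin m)) :
    Perm (Fin (k + m)) :=
  if h : A.card = k then encodePerm A h σ τ else 1

lemma key_sum (P : Perm (Fin (k + m)) → Prop) [DecidablePred P]
    (P1 : Perm (Fin k) → Prop) [DecidablePred P1]
    (P2 : Perm (Fin m) → Prop) [DecidablePred P2]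
    (hP : ∀ A (hA : A.card = k) σ τ, P (encodePerm A hA σ τ) ↔ P1 σ ∧ P2 τ) :
    ∑ π ∈ Finset.univ.filter P, (X : Polynomial ℝ) ^ invNum π =
      (∑ A ∈ Finset.powersetCard k (Finset.univ : Finset (Fin (k + m))),
          (X : Polynomial ℝ) ^ crossNum A) *
        (∑ σ ∈ Finset.univ.filter P1, (X : Polynomial ℝ) ^ invNum σ) *
        (∑ τ ∈ Finset.univ.filter P2, (X : Polynomial ℝ) ^ invNum τ) := by
  have hdec : ∀ π, P π ↔ P1 (decSigma π) ∧ P2 (decTau π) := by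
    intro π
    have := hP (blockSet π) (blockSet_card π) (decSigma π) (decTau π)
    rwa [encode_decode] at this
  have step : ∑ π ∈ Finset.univ.filter P, (X : Polynomial ℝ) ^ invNum π =
      ∑ t ∈ (Finset.powersetCard k (Finset.univ : Finset (Fin (k + m)))) ×ˢ
        ((Finset.univ.filter P1) ×ˢ (Finset.univ.filter P2)),
        (X : Polynomial ℝ) ^ (crossNum t.1 + (invNum t.2.1 + invNum t.2.2)) := by
    apply Finset.sum_nbij' (i := fun π => (blockSet π, decSigma π, decTau π))
      (j := fun t => encodeT t.1 t.2.1 t.2.2)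
    · intro π hπ
      rw [Finset.mem_filter] at hπ
      rw [Finset.mem_product, Finset.mem_product]
      refine ⟨Finset.mem_powersetCard_univ.2 (blockSet_card π), ?_, ?_⟩
      · exact Finset.mem_filter.2 ⟨Finset.mem_univ _, ((hdec π).1 hπ.2).1⟩
      · exact Finset.mem_filter.2 ⟨Finset.mem_univ _, ((hdec π).1 hπ.2).2⟩
    · rintro ⟨A, σ, τ⟩ ht
      rw [Finset.mem_product, Finset.mem_product] at ht
      have hA : A.card = k := Finset.mem_powersetCard_univ.1 ht.1
      simp only [encodeT, dif_pos hA]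
      rw [Finset.mem_filter]
      exact ⟨Finset.mem_univ _, (hP A hA σ τ).2 ⟨(Finset.mem_filter.1 ht.2.1).2,
        (Finset.mem_filter.1 ht.2.2).2⟩⟩
    · intro π hπ
      simp only [encodeT, dif_pos (blockSet_card π)]
      exact encode_decode π
    · rintro ⟨A, σ, τ⟩ ht
      rw [Finset.mem_product] at ht
      have hA : A.card = k := Finset.mem_powersetCard_univ.1 ht.1
      simp only [encodeT, dif_pos hA]
      exact Prod.ext (blockSet_encode A hA σ τ)
        (Prod.ext (decSigma_encode A hA σ τ) (decTau_encode A hA σ τ))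
    · intro π hπ
      have : invNum π = invNum (decSigma π) + invNum (decTau π) + crossNum (blockSet π) := by
        conv_lhs => rw [← encode_decode π]
        rw [invNum_encode]
      rw [this]
      ring_nf
  rw [step]
  simp only [Finset.sum_product, pow_add, ← Finset.mul_sum, ← Finset.sum_mul]
  ring

end KeySum
section QFact
open Equiv

lemma invNum_zero_perm (n : ℕ) (hn : n ≤ 1) (π : Perm (Fin n)) : invNum π = 0 := by
  rw [invNum, Finset.card_eq_zero, Finset.filter_eq_empty_iff]
  rintro ⟨a, b⟩ _
  rintro ⟨h1, -⟩
  have := a.isLt; have := b.isLt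
  rw [Fin.lt_def] at h1
  omega

lemma sum_perm_small (n : ℕ) (hn : n ≤ 1) :
    ∑ π : Perm (Fin n), (X : Polynomial ℝ) ^ invNum π = 1 := by
  have hu : ∀ π' : Perm (Fin n), π' = 1 := fun π' => by
    apply Equiv.ext; intro x
    have := x.isLt
    apply Fin.ext
    have h1 := (π' x).isLt
    omega
  rw [show (Finset.univ : Finset (Perm (Fin n))) = {1} from
    Finset.eq_singleton_iff_unique_mem.2 ⟨Finset.mem_univ _, fun π' _ => hu π'⟩]
  rw [Finset.sum_singleton, invNum_zero_perm n hn, pow_zero]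

lemma crossNum_singleton {n : ℕ} (v : Fin n) : crossNum {v} = (v : ℕ) := by
  have : (({v} : Finset (Fin n)) ×ˢ {v}ᶜ).filter (fun p => p.2 < p.1) =
      {v} ×ˢ Finset.Iio v := by
    ext ⟨a, b⟩
    simp only [Finset.mem_filter, Finset.mem_product, Finset.mem_singleton, Finset.mem_compl,
      Finset.mem_Iio]
    constructor
    · rintro ⟨⟨rfl, _⟩, h⟩; exact ⟨rfl, h⟩
    · rintro ⟨rfl, h⟩; exact ⟨⟨rfl, h.ne⟩, h⟩
  rw [crossNum, this, Finset.card_product, Finset.card_singleton, one_mul, Fin.card_Iio]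

lemma sum_perm_invNum : ∀ n : ℕ, ∑ π : Perm (Fin n), (X : Polynomial ℝ) ^ invNum π = qFactorial n
  | 0 => by rw [sum_perm_small 0 (by omega)]; rfl
  | (n + 1) => by
    have main : ∑ π : Perm (Fin (1 + n)), (X : Polynomial ℝ) ^ invNum π = qFactorial (1 + n) := by
      have h := key_sum (k := 1) (m := n) (fun _ => True) (fun _ => True) (fun _ => True)
        (by intro A hA σ τ; simp)
      simp only [Finset.filter_true] at h
      rw [h, sum_perm_small 1 (by omega), sum_perm_invNum n]
      have hA : ∑ A ∈ Finset.powersetCard 1 (Finset.univ : Finset (Fin (1 + n))),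
          (X : Polynomial ℝ) ^ crossNum A = qNum (1 + n) := by
        rw [Finset.powersetCard_one]
        rw [Finset.sum_map]
        simp only [Function.Embedding.coeFn_mk, crossNum_singleton]
        rw [qNum, ← Fin.sum_univ_eq_sum_range]
      rw [hA]
      have : qFactorial (1 + n) = qFactorial n * qNum (1 + n) := by
        rw [Nat.add_comm 1 n]; rfl
      rw [this]; ring
    exact (Nat.add_comm 1 n) ▸ main

lemma qFactorial_monic : ∀ n : ℕ, (qFactorial n).Monic
  | 0 => monic_one
  | (n + 1) => Monic.mul (qFactorial_monic n) (monic_geom_sum_X (by omega))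

lemma cross_sum_eq_qBinom (k m : ℕ) :
    ∑ A ∈ Finset.powersetCard k (Finset.univ : Finset (Fin (k + m))),
      (X : Polynomial ℝ) ^ crossNum A = qBinom (k + m) k := by
  have h := key_sum (k := k) (m := m) (fun _ => True) (fun _ => True) (fun _ => True)
    (by intro A hA σ τ; simp)
  simp only [Finset.filter_true] at h
  rw [sum_perm_invNum, sum_perm_invNum, sum_perm_invNum] at h
  rw [qBinom, Nat.add_sub_cancel_left]
  rw [show qFactorial (k + m) = (qFactorial k * qFactorial m) *
      (∑ A ∈ Finset.powersetCard k (Finset.univ : Finset (Fin (k + m))),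
        (X : Polynomial ℝ) ^ crossNum A) from by rw [h]; ring]
  rw [mul_divByMonic_cancel_left _ (Monic.mul (qFactorial_monic k) (qFactorial_monic m))]

end QFact
section PeakEnc
open Equiv

variable {k m : ℕ}

lemma peak_bounds {n : ℕ} {π : Perm (Fin n)} {x : ℕ} (h : x ∈ PeakSet π) : 2 ≤ x ∧ x < n := by
  obtain ⟨a, b, c, h1, h2, _, _, h5⟩ := mem_peakSet.1 h
  have := c.isLt; omega

lemma peakSet_encode (A : Finset (Fin (k + m))) (hA : A.card = k)
    (σ : Perm (Fin k)) (τ : Perm (Fin m)) {x : ℕ} (hx1 : x ≠ k) (hx2 : x ≠ k + 1) :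
    x ∈ PeakSet (encodePerm A hA σ τ) ↔
      x ∈ PeakSet σ ∨ x ∈ (PeakSet τ).image (· + k) := by
  constructor
  · intro h
    obtain ⟨a, b, c, h1, h2, h3, h4, h5⟩ := mem_peakSet.1 h
    rcases lt_or_ge x k with hxk | hxk
    · -- all three positions in the first block
      left
      have ha : (a : ℕ) < k := by omega
      have hb : (b : ℕ) < k := by omega
      have hc : (c : ℕ) < k := by omega
      have ea : a = Fin.castAdd m ⟨(a : ℕ), ha⟩ := Fin.ext rfl
      have eb : b = Fin.castAdd m ⟨(b : ℕ), hb⟩ := Fin.ext rfl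
      have ec : c = Fin.castAdd m ⟨(c : ℕ), hc⟩ := Fin.ext rfl
      rw [ea] at h3
      rw [eb] at h3 h4
      rw [ec] at h4
      rw [encodePerm_castAdd, encodePerm_castAdd] at h3
      rw [encodePerm_castAdd, encodePerm_castAdd] at h4
      exact mem_peakSet.2 ⟨⟨(a : ℕ), ha⟩, ⟨(b : ℕ), hb⟩, ⟨(c : ℕ), hc⟩, h1, h2,
        (embA_lt_embA hA).1 h3, (embA_lt_embA hA).1 h4, h5⟩
    · -- all three positions in the second block
      right
      have hxk2 : k + 2 ≤ x := by omega
      have ha : k ≤ (a : ℕ) := by omega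
      have hb : k ≤ (b : ℕ) := by omega
      have hc : k ≤ (c : ℕ) := by omega
      have ha' : (a : ℕ) - k < m := by have := a.isLt; omega
      have hb' : (b : ℕ) - k < m := by have := b.isLt; omega
      have hc' : (c : ℕ) - k < m := by have := c.isLt; omega
      have ea : a = Fin.natAdd k ⟨(a : ℕ) - k, ha'⟩ := Fin.ext (by simp [Fin.coe_natAdd]; omega)
      have eb : b = Fin.natAdd k ⟨(b : ℕ) - k, hb'⟩ := Fin.ext (by simp [Fin.coe_natAdd]; omega)
      have ec : c = Fin.natAdd k ⟨(c : ℕ) - k, hc'⟩ := Fin.ext (by simp [Fin.coe_natAdd]; omega)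
      rw [ea] at h3
      rw [eb] at h3 h4
      rw [ec] at h4
      rw [encodePerm_natAdd, encodePerm_natAdd] at h3
      rw [encodePerm_natAdd, encodePerm_natAdd] at h4
      refine Finset.mem_image.2 ⟨x - k, ?_, by omega⟩
      exact mem_peakSet.2 ⟨⟨(a : ℕ) - k, ha'⟩, ⟨(b : ℕ) - k, hb'⟩, ⟨(c : ℕ) - k, hc'⟩,
        by simp; omega, by simp; omega,
        (embB_lt_embB hA).1 h3, (embB_lt_embB hA).1 h4, by simp; omega⟩
  · rintro (h | h)
    · obtain ⟨a, b, c, h1, h2, h3, h4, h5⟩ := mem_peakSet.1 h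
      refine mem_peakSet.2 ⟨Fin.castAdd m a, Fin.castAdd m b, Fin.castAdd m c,
        h1, h2, ?_, ?_, h5⟩
      · rw [encodePerm_castAdd, encodePerm_castAdd]
        exact (embA_lt_embA hA).2 h3
      · rw [encodePerm_castAdd, encodePerm_castAdd]
        exact (embA_lt_embA hA).2 h4
    · obtain ⟨y, hy, hyx⟩ := Finset.mem_image.1 h
      obtain ⟨a, b, c, h1, h2, h3, h4, h5⟩ := mem_peakSet.1 hy
      refine mem_peakSet.2 ⟨Fin.natAdd k a, Fin.natAdd k b, Fin.natAdd k c,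
        by simp [Fin.coe_natAdd]; omega, by simp [Fin.coe_natAdd]; omega, ?_, ?_,
        by simp [Fin.coe_natAdd]; omega⟩
      · rw [encodePerm_natAdd, encodePerm_natAdd]
        exact (embB_lt_embB hA).2 h3
      · rw [encodePerm_natAdd, encodePerm_natAdd]
        exact (embB_lt_embB hA).2 h4

lemma peakSet_encode_sdiff (A : Finset (Fin (k + m))) (hA : A.card = k)
    (σ : Perm (Fin k)) (τ : Perm (Fin m)) :
    PeakSet (encodePerm A hA σ τ) \ {k, k + 1} =
      PeakSet σ ∪ (PeakSet τ).image (· + k) := by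
  ext x
  rw [Finset.mem_sdiff, Finset.mem_insert, Finset.mem_singleton, Finset.mem_union]
  by_cases hx : x = k ∨ x = k + 1
  · constructor
    · rintro ⟨-, hk⟩; exact absurd hx hk
    · rintro (h | h)
      · exfalso; have := (peak_bounds h).2; omega
      · exfalso
        obtain ⟨y, hy, hxy⟩ := Finset.mem_image.1 h
        have := (peak_bounds hy).1
        omega
  · push_neg at hx
    rw [peakSet_encode A hA σ τ hx.1 hx.2]
    tauto

lemma union_eq_iff {S1 : Finset ℕ} (hS1 : ∀ x ∈ S1, x < k)
    (σ : Perm (Fin k)) (τ : Perm (Fin m)) :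
    PeakSet σ ∪ (PeakSet τ).image (· + k) = S1 ↔ PeakSet σ = S1 ∧ PeakSet τ = ∅ := by
  constructor
  · intro h
    have himg : (PeakSet τ).image (· + k) = ∅ := by
      rw [Finset.eq_empty_iff_forall_notMem]
      intro y hy
      have hy' : y ∈ S1 := h ▸ Finset.mem_union_right _ hy
      obtain ⟨z, hz, hzy⟩ := Finset.mem_image.1 hy
      have := hS1 y hy'
      omega
    have hτ : PeakSet τ = ∅ := Finset.image_eq_empty.1 himg
    rw [himg, Finset.union_empty] at h
    exact ⟨h, hτ⟩
  · rintro ⟨h1, h2⟩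
    rw [h1, h2, Finset.image_empty, Finset.union_empty]

end PeakEnc
section VPerm
open Equiv

variable {μ : ℕ}

lemma card_le_fin (B : Finset (Fin μ)) : B.card ≤ μ := by
  simpa using Finset.card_le_univ B

lemma card_compl_fin (B : Finset (Fin μ)) : Bᶜ.card = μ - B.card := by
  rw [Finset.card_compl, Fintype.card_fin]

def vfun (B : Finset (Fin μ)) : Fin μ → Fin μ := fun p =>
  if h : (p : ℕ) < B.card then B.orderEmbOfFin rfl ⟨B.card - 1 - (p : ℕ), by omega⟩
  else Bᶜ.orderEmbOfFin (card_compl_fin B) ⟨(p : ℕ) - B.card,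
    by have := p.isLt; have := card_le_fin B; omega⟩

lemma vfun_mem {B : Finset (Fin μ)} {p : Fin μ} (hp : (p : ℕ) < B.card) : vfun B p ∈ B := by
  simp only [vfun]
  rw [dif_pos hp]; exact Finset.orderEmbOfFin_mem _ _ _

lemma vfun_not_mem {B : Finset (Fin μ)} {p : Fin μ} (hp : ¬ (p : ℕ) < B.card) :
    vfun B p ∉ B := by
  simp only [vfun]
  rw [dif_neg hp]
  have := Finset.orderEmbOfFin_mem Bᶜ (card_compl_fin B)
    ⟨(p : ℕ) - B.card, by have := p.isLt; have := card_le_fin B; omega⟩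
  rwa [Finset.mem_compl] at this

lemma vfun_injective (B : Finset (Fin μ)) : Function.Injective (vfun B) := by
  intro p q h
  by_cases hp : (p : ℕ) < B.card <;> by_cases hq : (q : ℕ) < B.card
  · simp only [vfun] at h
    rw [dif_pos hp, dif_pos hq] at h
    have := (B.orderEmbOfFin rfl).injective h
    have := congrArg Fin.val this
    simp only at this
    exact Fin.ext (by omega)
  · exact absurd (h ▸ vfun_mem hp) (vfun_not_mem hq)
  · exact absurd (h.symm ▸ vfun_mem hq) (vfun_not_mem hp)
  · simp only [vfun] at h
    rw [dif_neg hp, dif_neg hq] at h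
    have := (Bᶜ.orderEmbOfFin (card_compl_fin B)).injective h
    have := congrArg Fin.val this
    simp only at this
    exact Fin.ext (by omega)

def vperm (B : Finset (Fin μ)) : Perm (Fin μ) :=
  Equiv.ofBijective (vfun B) (Finite.injective_iff_bijective.1 (vfun_injective B))

lemma vperm_apply (B : Finset (Fin μ)) (p : Fin μ) : vperm B p = vfun B p := rfl

lemma vperm_mem {B : Finset (Fin μ)} {p : Fin μ} (hp : (p : ℕ) < B.card) : vperm B p ∈ B :=
  vfun_mem hp

lemma vperm_not_mem {B : Finset (Fin μ)} {p : Fin μ} (hp : ¬ (p : ℕ) < B.card) :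
    vperm B p ∉ B := vfun_not_mem hp

lemma vperm_prefix_anti {B : Finset (Fin μ)} {p q : Fin μ} (hq : (q : ℕ) < B.card)
    (hpq : p < q) : vperm B q < vperm B p := by
  have hp : (p : ℕ) < B.card := lt_trans hpq hq
  rw [vperm_apply, vperm_apply]
  simp only [vfun]
  rw [dif_pos hp, dif_pos hq]
  apply (B.orderEmbOfFin rfl).strictMono
  rw [Fin.lt_def]
  simp only
  rw [Fin.lt_def] at hpq
  omega

lemma vperm_suffix_mono {B : Finset (Fin μ)} {p q : Fin μ} (hp : ¬ (p : ℕ) < B.card)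
    (hpq : p < q) : vperm B p < vperm B q := by
  have hq : ¬ (q : ℕ) < B.card := by rw [Fin.lt_def] at hpq; omega
  rw [vperm_apply, vperm_apply]
  simp only [vfun]
  rw [dif_neg hp, dif_neg hq]
  apply (Bᶜ.orderEmbOfFin (card_compl_fin B)).strictMono
  rw [Fin.lt_def]
  simp only
  rw [Fin.lt_def] at hpq
  omega

lemma peakSet_vperm (B : Finset (Fin μ)) : PeakSet (vperm B) = ∅ := by
  rw [Finset.eq_empty_iff_forall_notMem]
  intro x hx
  obtain ⟨a, b, c, h1, h2, h3, h4, _⟩ := mem_peakSet.1 hx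
  have hab : a < b := by rw [Fin.lt_def]; omega
  have hbc : b < c := by rw [Fin.lt_def]; omega
  by_cases hb : (b : ℕ) < B.card
  · exact absurd h3 (not_lt.2 (vperm_prefix_anti hb hab).le)
  · exact absurd h4 (not_lt.2 (vperm_suffix_mono hb hbc).le)

lemma vperm_inv_char (B : Finset (Fin μ)) (p q : Fin μ) :
    (p < q ∧ vperm B q < vperm B p) ↔ (vperm B p ∈ B ∧ vperm B q < vperm B p) := by
  constructor
  · rintro ⟨hpq, hv⟩
    refine ⟨?_, hv⟩
    by_contra hmem
    have hp : ¬ (p : ℕ) < B.card := fun h => hmem (vperm_mem h)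
    exact absurd hv (not_lt.2 (vperm_suffix_mono hp hpq).le)
  · rintro ⟨hmem, hv⟩
    refine ⟨?_, hv⟩
    have hp : (p : ℕ) < B.card := by
      by_contra h; exact (vperm_not_mem h) hmem
    rcases lt_trichotomy p q with h | h | h
    · exact h
    · exact absurd hv (by rw [h]; exact lt_irrefl _)
    · exact absurd hv (not_lt.2 (vperm_prefix_anti hp h).le)

lemma invNum_vperm (B : Finset (Fin μ)) : invNum (vperm B) = ∑ v ∈ B, (v : ℕ) := by
  rw [invNum_eq]
  have : ∑ v ∈ B, (v : ℕ) = (B.sigma fun v => Finset.Iio v).card := by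
    rw [Finset.card_sigma]
    exact Finset.sum_congr rfl fun v _ => (Fin.card_Iio v).symm
  rw [this]
  apply Finset.card_bij (fun p _ => ⟨vperm B p.1, vperm B p.2⟩)
  · rintro ⟨p, q⟩ hp
    simp only [invSet, Finset.mem_filter, Finset.mem_univ, true_and] at hp
    have := (vperm_inv_char B p q).1 hp
    exact Finset.mem_sigma.2 ⟨this.1, Finset.mem_Iio.2 this.2⟩
  · rintro ⟨p, q⟩ _ ⟨p', q'⟩ _ h
    rw [Sigma.mk.inj_iff] at h
    have h1 := (vperm B).injective h.1
    have h2 := (vperm B).injective (eq_of_heq h.2)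
    rw [Prod.ext h1 h2]
  · rintro ⟨v, w⟩ hvw
    rw [Finset.mem_sigma, Finset.mem_Iio] at hvw
    refine ⟨((vperm B).symm v, (vperm B).symm w), ?_, ?_⟩
    · simp only [invSet, Finset.mem_filter, Finset.mem_univ, true_and]
      apply (vperm_inv_char B _ _).2
      simp only [Equiv.apply_symm_apply]
      exact ⟨hvw.1, hvw.2⟩
    · simp only [Equiv.apply_symm_apply]

end VPerm
section PeakFree
open Equiv

variable {m : ℕ}

lemma asc_propagate (τ : Perm (Fin (m + 1))) (hτ : PeakSet τ = ∅) :
    ∀ j (hj : j + 1 ≤ m) i (hij : i ≤ j),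
      τ ⟨i, by omega⟩ < τ ⟨i + 1, by omega⟩ → τ ⟨j, by omega⟩ < τ ⟨j + 1, by omega⟩ := by
  intro j
  induction j with
  | zero =>
    intro hj i hij h
    have : i = 0 := by omega
    subst this
    exact h
  | succ j ih =>
    intro hj i hij h
    rcases Nat.lt_or_ge i (j + 1) with hi | hi
    · have hj' : j + 1 ≤ m := by omega
      have hascj : τ ⟨j, by omega⟩ < τ ⟨j + 1, by omega⟩ := ih hj' i (by omega) h
      by_contra hnot
      have hne : τ ⟨j + 1 + 1, by omega⟩ ≠ τ ⟨j + 1, by omega⟩ := by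
        intro e
        have := τ.injective e
        rw [Fin.mk.injEq] at this
        omega
      have hlt : τ ⟨j + 1 + 1, by omega⟩ < τ ⟨j + 1, by omega⟩ :=
        lt_of_le_of_ne (not_lt.1 hnot) hne
      have hmem : ((j + 1 : ℕ) + 1) ∈ PeakSet τ :=
        mem_peakSet.2 ⟨⟨j, by omega⟩, ⟨j + 1, by omega⟩, ⟨j + 1 + 1, by omega⟩,
          rfl, rfl, hascj, hlt, rfl⟩
      rw [hτ] at hmem
      exact absurd hmem (Finset.notMem_empty _)
    · have : i = j + 1 := by omega
      subst this
      exact h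

lemma prefix_desc (τ : Perm (Fin (m + 1))) (hτ : PeakSet τ = ∅) (i : ℕ)
    (hi : i + 1 ≤ ((τ.symm 0 : Fin (m + 1)) : ℕ)) (h1 : i < m + 1) (h2 : i + 1 < m + 1) :
    τ ⟨i + 1, h2⟩ < τ ⟨i, h1⟩ := by
  set d := ((τ.symm 0 : Fin (m + 1)) : ℕ) with hd
  have hdm : d < m + 1 := (τ.symm 0).isLt
  by_contra hnot
  have hne : τ ⟨i, h1⟩ ≠ τ ⟨i + 1, h2⟩ := by
    intro e
    have := τ.injective e
    rw [Fin.mk.injEq] at this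
    omega
  have hasc : τ ⟨i, h1⟩ < τ ⟨i + 1, h2⟩ := lt_of_le_of_ne (not_lt.1 hnot) hne
  have h2' : τ ⟨d - 1, by omega⟩ < τ ⟨d - 1 + 1, by omega⟩ :=
    asc_propagate τ hτ (d - 1) (by omega) i (by omega) hasc
  have he : (⟨d - 1 + 1, by omega⟩ : Fin (m + 1)) = τ.symm 0 := Fin.ext (by simp [hd]; omega)
  rw [he, Equiv.apply_symm_apply] at h2'
  exact absurd h2' (Fin.not_lt_zero _)

set_option maxHeartbeats 1000000 in
lemma suffix_asc (τ : Perm (Fin (m + 1))) (hτ : PeakSet τ = ∅) (i : ℕ)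
    (hd : ((τ.symm 0 : Fin (m + 1)) : ℕ) ≤ i) (hi : i + 1 ≤ m) (h1 : i < m + 1)
    (h2 : i + 1 < m + 1) :
    τ ⟨i, h1⟩ < τ ⟨i + 1, h2⟩ := by
  set d := ((τ.symm 0 : Fin (m + 1)) : ℕ) with hdd
  by_contra hnot
  have hne : τ ⟨d, by omega⟩ ≠ τ ⟨d + 1, by omega⟩ := by
    intro e
    have := τ.injective e
    rw [Fin.mk.injEq] at this
    omega
  have hdasc : ¬ τ ⟨d, by omega⟩ < τ ⟨d + 1, by omega⟩ := by
    intro hasc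
    exact hnot (asc_propagate τ hτ i hi d hd hasc)
  have hlt : τ ⟨d + 1, by omega⟩ < τ ⟨d, by omega⟩ :=
    lt_of_le_of_ne (not_lt.1 hdasc) (Ne.symm hne)
  have he : (⟨d, by omega⟩ : Fin (m + 1)) = τ.symm 0 := Fin.ext (by simp [hdd])
  rw [he, Equiv.apply_symm_apply] at hlt
  exact absurd hlt (Fin.not_lt_zero _)

lemma prefix_chain (τ : Perm (Fin (m + 1))) (hτ : PeakSet τ = ∅) :
    ∀ j i (hij : i < j) (hj : j ≤ ((τ.symm 0 : Fin (m + 1)) : ℕ)) (h1 : j < m + 1)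
      (h2 : i < m + 1), τ ⟨j, h1⟩ < τ ⟨i, h2⟩ := by
  intro j
  induction j with
  | zero => intro i hij _ _ _; omega
  | succ j ih =>
    intro i hij hj h1 h2
    rcases Nat.lt_or_ge i j with hi | hi
    · exact lt_trans (prefix_desc τ hτ j hj (by omega) h1) (ih i hi (by omega) (by omega) h2)
    · have : i = j := by omega
      subst this
      exact prefix_desc τ hτ i hj h2 h1

lemma suffix_chain (τ : Perm (Fin (m + 1))) (hτ : PeakSet τ = ∅) :
    ∀ j i (hij : i < j) (hd : ((τ.symm 0 : Fin (m + 1)) : ℕ) ≤ i) (hj : j ≤ m)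
      (h1 : i < m + 1) (h2 : j < m + 1), τ ⟨i, h1⟩ < τ ⟨j, h2⟩ := by
  intro j
  induction j with
  | zero => intro i hij _ _ _ _; omega
  | succ j ih =>
    intro i hij hd hj h1 h2
    rcases Nat.lt_or_ge i j with hi | hi
    · exact lt_trans (ih i hi hd (by omega) h1 (by omega))
        (suffix_asc τ hτ j (by omega) hj (by omega) h2)
    · have : i = j := by omega
      subst this
      exact suffix_asc τ hτ i hd hj h1 h2

def decB (τ : Perm (Fin (m + 1))) : Finset (Fin (m + 1)) :=
  (Finset.univ.filter fun p : Fin (m + 1) => (p : ℕ) < ((τ.symm 0 : Fin (m + 1)) : ℕ)).image τ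

lemma filter_lt_eq_Iio (d : Fin (m + 1)) :
    (Finset.univ.filter fun p : Fin (m + 1) => (p : ℕ) < (d : ℕ)) = Finset.Iio d := by
  ext p
  simp only [Finset.mem_filter, Finset.mem_univ, true_and, Finset.mem_Iio, Fin.lt_def]

lemma decB_card (τ : Perm (Fin (m + 1))) : (decB τ).card = ((τ.symm 0 : Fin (m + 1)) : ℕ) := by
  rw [decB, Finset.card_image_of_injective _ τ.injective, filter_lt_eq_Iio, Fin.card_Iio]

lemma mem_decB {τ : Perm (Fin (m + 1))} {v : Fin (m + 1)} :
    v ∈ decB τ ↔ ((τ.symm v : Fin (m + 1)) : ℕ) < ((τ.symm 0 : Fin (m + 1)) : ℕ) := by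
  rw [decB, Finset.mem_image]
  constructor
  · rintro ⟨p, hp, rfl⟩
    rw [Finset.mem_filter] at hp
    rw [Equiv.symm_apply_apply]
    exact hp.2
  · intro h
    exact ⟨τ.symm v, Finset.mem_filter.2 ⟨Finset.mem_univ _, h⟩, Equiv.apply_symm_apply _ _⟩

lemma zero_not_mem_decB (τ : Perm (Fin (m + 1))) : (0 : Fin (m + 1)) ∉ decB τ := by
  rw [mem_decB]
  omega

lemma vperm_decB (τ : Perm (Fin (m + 1))) (hτ : PeakSet τ = ∅) : vperm (decB τ) = τ := by
  apply Equiv.ext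
  intro p
  set B := decB τ with hB
  have hcard : B.card = ((τ.symm 0 : Fin (m + 1)) : ℕ) := decB_card τ
  set d := ((τ.symm 0 : Fin (m + 1)) : ℕ) with hdd
  have hdm : d < m + 1 := (τ.symm 0).isLt
  by_cases hp : (p : ℕ) < B.card
  · -- prefix
    have hgf : (fun i : Fin B.card => τ ⟨d - 1 - (i : ℕ), by omega⟩) =
        ⇑(B.orderEmbOfFin rfl) := by
      apply Finset.orderEmbOfFin_unique
      · intro i
        have hi : (i : ℕ) < d := hcard ▸ i.isLt
        show _ ∈ decB τ
        rw [decB, Finset.mem_image]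
        refine ⟨⟨d - 1 - (i : ℕ), by omega⟩, Finset.mem_filter.2 ⟨Finset.mem_univ _, ?_⟩, rfl⟩
        show d - 1 - (i : ℕ) < d
        omega
      · intro i i' hii
        have hi' : (i' : ℕ) < d := hcard ▸ i'.isLt
        exact prefix_chain τ hτ (d - 1 - (i : ℕ)) (d - 1 - (i' : ℕ))
          (by rw [Fin.lt_def] at hii; omega) (by omega) (by omega) (by omega)
    rw [vperm_apply]
    simp only [vfun]
    rw [dif_pos hp]
    rw [← congrFun hgf ⟨B.card - 1 - (p : ℕ), by omega⟩]
    congr 1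
    apply Fin.ext
    show d - 1 - (B.card - 1 - (p : ℕ)) = (p : ℕ)
    omega
  · -- suffix
    have hgf : (fun j : Fin (m + 1 - B.card) => τ ⟨d + (j : ℕ), by have := j.isLt; omega⟩) =
        ⇑(Bᶜ.orderEmbOfFin (card_compl_fin B)) := by
      apply Finset.orderEmbOfFin_unique
      · intro j
        have hj : (j : ℕ) < m + 1 - d := by have := j.isLt; omega
        rw [Finset.mem_compl]
        show ¬ _ ∈ decB τ
        rw [mem_decB, Equiv.symm_apply_apply]
        show ¬ (d + (j : ℕ) < d)
        omega
      · intro j j' hjj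
        have hj' : (j' : ℕ) < m + 1 - d := by have := j'.isLt; omega
        exact suffix_chain τ hτ (d + (j' : ℕ)) (d + (j : ℕ))
          (by rw [Fin.lt_def] at hjj; omega) (by omega) (by omega) (by omega) (by omega)
    rw [vperm_apply]
    simp only [vfun]
    rw [dif_neg hp]
    rw [← congrFun hgf ⟨(p : ℕ) - B.card, by have := p.isLt; have := card_le_fin B; omega⟩]
    congr 1
    apply Fin.ext
    show d + ((p : ℕ) - B.card) = (p : ℕ)
    omega

lemma decB_vperm (B : Finset (Fin (m + 1))) (h0 : (0 : Fin (m + 1)) ∉ B) :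
    decB (vperm B) = B := by
  have hcard_le : B.card ≤ m := by
    have hsub : B ⊆ Finset.univ.erase 0 := fun v hv =>
      Finset.mem_erase.2 ⟨fun e => h0 (e ▸ hv), Finset.mem_univ _⟩
    have := Finset.card_le_card hsub
    rwa [Finset.card_erase_of_mem (Finset.mem_univ _), Finset.card_univ, Fintype.card_fin,
      Nat.add_sub_cancel] at this
  have hv0 : vperm B ⟨B.card, by omega⟩ = 0 := by
    rw [vperm_apply]
    simp only [vfun]
    rw [dif_neg (by simp)]
    have hpos : 0 < m + 1 - B.card := by omega
    simp only [Nat.sub_self]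
    rw [Finset.orderEmbOfFin_zero]
    apply le_antisymm _ (Fin.zero_le _)
    exact Finset.min'_le _ _ (Finset.mem_compl.2 h0)
  have hsymm : (vperm B).symm 0 = ⟨B.card, by omega⟩ := by
    rw [← hv0, Equiv.symm_apply_apply]
  apply Finset.eq_of_subset_of_card_le
  · intro v hv
    rw [decB, Finset.mem_image] at hv
    obtain ⟨p, hp, rfl⟩ := hv
    rw [Finset.mem_filter, hsymm] at hp
    exact vperm_mem (by simpa using hp.2)
  · rw [decB_card, hsymm]

lemma sum_peakfree (m : ℕ) :
    ∑ τ ∈ Finset.univ.filter (fun τ : Perm (Fin (m + 1)) => PeakSet τ = ∅),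
      (X : Polynomial ℝ) ^ invNum τ = qPoch m := by
  have step1 : ∑ τ ∈ Finset.univ.filter (fun τ : Perm (Fin (m + 1)) => PeakSet τ = ∅),
      (X : Polynomial ℝ) ^ invNum τ =
      ∑ B ∈ (Finset.univ.erase (0 : Fin (m + 1))).powerset,
        (X : Polynomial ℝ) ^ (∑ v ∈ B, (v : ℕ)) := by
    symm
    apply Finset.sum_nbij' (i := fun B => vperm B) (j := fun τ => decB τ)
    · intro B hB
      exact Finset.mem_filter.2 ⟨Finset.mem_univ _, peakSet_vperm B⟩
    · intro τ hτ
      rw [Finset.mem_powerset]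
      intro v hv
      refine Finset.mem_erase.2 ⟨?_, Finset.mem_univ _⟩
      intro e
      exact zero_not_mem_decB τ (e ▸ hv)
    · intro B hB
      apply decB_vperm
      intro h0
      have := Finset.mem_powerset.1 hB h0
      rw [Finset.mem_erase] at this
      exact this.1 rfl
    · intro τ hτ
      exact vperm_decB τ (Finset.mem_filter.1 hτ).2
    · intro B hB
      rw [invNum_vperm]
  rw [step1]
  have step2 : ∑ B ∈ (Finset.univ.erase (0 : Fin (m + 1))).powerset,
      (X : Polynomial ℝ) ^ (∑ v ∈ B, (v : ℕ)) =
      ∏ v ∈ Finset.univ.erase (0 : Fin (m + 1)), (1 + (X : Polynomial ℝ) ^ (v : ℕ)) := by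
    rw [show ∏ v ∈ Finset.univ.erase (0 : Fin (m + 1)), (1 + (X : Polynomial ℝ) ^ (v : ℕ)) =
        ∏ v ∈ Finset.univ.erase (0 : Fin (m + 1)), ((X : Polynomial ℝ) ^ (v : ℕ) + 1) from
      Finset.prod_congr rfl fun v _ => add_comm _ _]
    rw [Finset.prod_add]
    apply Finset.sum_congr rfl
    intro B hB
    rw [Finset.prod_const_one, mul_one, Finset.prod_pow_eq_pow_sum]
  rw [step2, qPoch]
  symm
  apply Finset.prod_bij (i := fun a (ha : a ∈ Finset.range m) =>
    (⟨a + 1, by rw [Finset.mem_range] at ha; omega⟩ : Fin (m + 1)))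
  · intro a ha
    exact Finset.mem_erase.2 ⟨by simp [Fin.ext_iff], Finset.mem_univ _⟩
  · intro a ha a' ha' h
    rw [Fin.mk.injEq] at h
    omega
  · intro v hv
    rw [Finset.mem_erase] at hv
    have h1 : (v : ℕ) ≠ 0 := fun e => hv.1 (Fin.ext (by simp [e]))
    have h2 : (v : ℕ) < m + 1 := v.isLt
    exact ⟨(v : ℕ) - 1, Finset.mem_range.2 (by omega), Fin.ext (by simp; omega)⟩
  · intro a ha
    rfl

end PeakFree
end Aux
open Aux in
/-- the recurrence
`P_S(n,q) = [n choose k]_q P_{S₁}(k,q) (−q;q)_{n-k-1} − P_{S₁}(n,q) − P_{S₂}(n,q)`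
where `S₁ = S ∖ {s_r}`, `k = s_r − 1` and `S₂ = S₁ ∪ {k}` for `s_r = max S`. -/
theorem stmt11 (n : ℕ) (S : Finset ℕ) (hS : S.Nonempty)
    (hadm : ∃ π : Equiv.Perm (Fin n), PeakSet π = S) :
    Ppoly S n =
      qBinom n (S.max' hS - 1) * Ppoly (S.erase (S.max' hS)) (S.max' hS - 1) *
          qPoch (n - (S.max' hS - 1) - 1)
        - Ppoly (S.erase (S.max' hS)) n
        - Ppoly (insert (S.max' hS - 1) (S.erase (S.max' hS))) n := by
  classical
  obtain ⟨π0, hπ0⟩ := hadm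
  set sr := S.max' hS with hsr
  have hsr_mem : sr ∈ S := S.max'_mem hS
  have hbounds : ∀ x ∈ S, 2 ≤ x ∧ x < n := fun x hx =>
    peak_bounds (show x ∈ PeakSet π0 by rw [hπ0]; exact hx)
  have hsr2 : 2 ≤ sr := (hbounds sr hsr_mem).1
  have hsrn : sr < n := (hbounds sr hsr_mem).2
  set k := sr - 1 with hk
  have hk1 : k + 1 = sr := by omega
  have hknotS : k ∉ S := by
    intro hkS
    exact peak_not_adjacent (show k ∈ PeakSet π0 by rw [hπ0]; exact hkS)
      (show k + 1 ∈ PeakSet π0 by rw [hπ0, hk1]; exact hsr_mem)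
  set S1 := S.erase sr with hS1
  have hS1lt : ∀ x ∈ S1, x < k := by
    intro x hx
    rw [hS1, Finset.mem_erase] at hx
    have hle := S.le_max' x hx.2
    have hne := hx.1
    have hxk : x ≠ k := fun e => hknotS (e ▸ hx.2)
    omega
  have hkS1 : k ∉ S1 := fun h => absurd (hS1lt k h) (lt_irrefl k)
  have hk1S1 : k + 1 ∉ S1 := fun h => by have := hS1lt _ h; omega
  have hSins : insert (k + 1) S1 = S := by rw [hk1, hS1]; exact Finset.insert_erase hsr_mem
  obtain ⟨j, rfl⟩ : ∃ j, n = k + (j + 1 + 1) := ⟨n - k - 2, by omega⟩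
  -- the key identity
  have hP : ∀ (A : Finset (Fin (k + (j + 1 + 1)))) (hA : A.card = k) (σ : Equiv.Perm (Fin k))
      (τ : Equiv.Perm (Fin (j + 1 + 1))),
      (PeakSet (encodePerm A hA σ τ) \ {k, k + 1} = S1) ↔
        (PeakSet σ = S1 ∧ PeakSet τ = ∅) := by
    intro A hA σ τ
    rw [peakSet_encode_sdiff]
    exact union_eq_iff hS1lt σ τ
  have e1 : ∑ π ∈ Finset.univ.filter
        (fun π : Equiv.Perm (Fin (k + (j + 1 + 1))) => PeakSet π \ {k, k + 1} = S1),
        (X : Polynomial ℝ) ^ invNum π =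
      qBinom (k + (j + 1 + 1)) k * Ppoly S1 k * qPoch (j + 1) := by
    have h := key_sum (fun π : Equiv.Perm (Fin (k + (j + 1 + 1))) =>
        PeakSet π \ {k, k + 1} = S1)
      (fun σ : Equiv.Perm (Fin k) => PeakSet σ = S1)
      (fun τ : Equiv.Perm (Fin (j + 1 + 1)) => PeakSet τ = ∅) hP
    rw [cross_sum_eq_qBinom, sum_peakfree] at h
    exact h
  have hPiff : ∀ π : Equiv.Perm (Fin (k + (j + 1 + 1))),
      PeakSet π \ {k, k + 1} = S1 ↔
        (PeakSet π = S1 ∨ PeakSet π = insert k S1 ∨ PeakSet π = S) := by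
    intro π
    constructor
    · intro h
      by_cases hk_ : k ∈ PeakSet π <;> by_cases hk1_ : (k + 1) ∈ PeakSet π
      · exact (peak_not_adjacent hk_ hk1_).elim
      · right; left
        rw [← h]
        ext x
        rw [Finset.mem_insert, Finset.mem_sdiff, Finset.mem_insert, Finset.mem_singleton]
        constructor
        · intro hx
          by_cases hxk : x = k
          · exact Or.inl hxk
          · exact Or.inr ⟨hx, by push_neg; exact ⟨hxk, fun hxx => hk1_ (hxx ▸ hx)⟩⟩
        · rintro (rfl | ⟨hx, _⟩)
          · exact hk_
          · exact hx
      · right; right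
        rw [← hSins, ← h]
        ext x
        rw [Finset.mem_insert, Finset.mem_sdiff, Finset.mem_insert, Finset.mem_singleton]
        constructor
        · intro hx
          by_cases hxk : x = k + 1
          · exact Or.inl hxk
          · exact Or.inr ⟨hx, by push_neg; exact ⟨fun hxx => hk_ (hxx ▸ hx), hxk⟩⟩
        · rintro (rfl | ⟨hx, _⟩)
          · exact hk1_
          · exact hx
      · left
        rw [← h]
        ext x
        rw [Finset.mem_sdiff, Finset.mem_insert, Finset.mem_singleton]
        constructor
        · intro hx
          refine ⟨hx, ?_⟩
          rintro (rfl | rfl)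
          · exact hk_ hx
          · exact hk1_ hx
        · rintro ⟨hx, -⟩; exact hx
    · have hgen : ∀ T : Finset ℕ, k ∉ T → k + 1 ∉ T → T \ {k, k + 1} = T := by
        intro T h1 h2
        ext x
        rw [Finset.mem_sdiff, Finset.mem_insert, Finset.mem_singleton]
        constructor
        · rintro ⟨hx, -⟩; exact hx
        · intro hx
          refine ⟨hx, ?_⟩
          rintro (rfl | rfl)
          · exact h1 hx
          · exact h2 hx
      rintro (h | h | h) <;> rw [h]
      · exact hgen S1 hkS1 hk1S1
      · rw [Finset.insert_sdiff_of_mem _ (Finset.mem_insert_self k {k + 1})]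
        exact hgen S1 hkS1 hk1S1
      · rw [← hSins, Finset.insert_sdiff_of_mem _
          (Finset.mem_insert_of_mem (Finset.mem_singleton_self (k + 1)))]
        exact hgen S1 hkS1 hk1S1
  have hfilter : Finset.univ.filter
        (fun π : Equiv.Perm (Fin (k + (j + 1 + 1))) => PeakSet π \ {k, k + 1} = S1) =
      (Finset.univ.filter fun π : Equiv.Perm (Fin (k + (j + 1 + 1))) => PeakSet π = S1) ∪
        ((Finset.univ.filter fun π : Equiv.Perm (Fin (k + (j + 1 + 1))) =>
            PeakSet π = insert k S1) ∪
          (Finset.univ.filter fun π : Equiv.Perm (Fin (k + (j + 1 + 1))) => PeakSet π = S)) := by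
    ext π
    simp only [Finset.mem_filter, Finset.mem_union, Finset.mem_univ, true_and]
    exact hPiff π
  have hd2 : Disjoint
      (Finset.univ.filter fun π : Equiv.Perm (Fin (k + (j + 1 + 1))) =>
        PeakSet π = insert k S1)
      (Finset.univ.filter fun π : Equiv.Perm (Fin (k + (j + 1 + 1))) => PeakSet π = S) := by
    rw [Finset.disjoint_left]
    intro π h1 h2
    rw [Finset.mem_filter] at h1 h2
    have : insert k S1 = S := h1.2 ▸ h2.2
    exact hknotS (this ▸ Finset.mem_insert_self k S1)
  have hd1 : Disjoint
      (Finset.univ.filter fun π : Equiv.Perm (Fin (k + (j + 1 + 1))) => PeakSet π = S1)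
      ((Finset.univ.filter fun π : Equiv.Perm (Fin (k + (j + 1 + 1))) =>
          PeakSet π = insert k S1) ∪
        (Finset.univ.filter fun π : Equiv.Perm (Fin (k + (j + 1 + 1))) => PeakSet π = S)) := by
    rw [Finset.disjoint_union_right, Finset.disjoint_left, Finset.disjoint_left]
    constructor
    · intro π h1 h2
      rw [Finset.mem_filter] at h1 h2
      have : S1 = insert k S1 := h1.2 ▸ h2.2
      exact hkS1 (this ▸ Finset.mem_insert_self k S1)
    · intro π h1 h2
      rw [Finset.mem_filter] at h1 h2
      have heq : S1 = S := h1.2 ▸ h2.2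
      have : k + 1 ∈ S1 := by rw [heq, hk1]; exact hsr_mem
      exact hk1S1 this
  have e2 : ∑ π ∈ Finset.univ.filter
        (fun π : Equiv.Perm (Fin (k + (j + 1 + 1))) => PeakSet π \ {k, k + 1} = S1),
        (X : Polynomial ℝ) ^ invNum π =
      Ppoly S1 (k + (j + 1 + 1)) + (Ppoly (insert k S1) (k + (j + 1 + 1)) +
        Ppoly S (k + (j + 1 + 1))) := by
    rw [hfilter, Finset.sum_union hd1, Finset.sum_union hd2]
    rfl
  have hE := e1.symm.trans e2
  have hq : k + (j + 1 + 1) - k - 1 = j + 1 := by omega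
  rw [hq]
  linear_combination -hE

end
end

section
/- For every odd integer m ≥ 1, the polynomial E_m(q) is palindromic in degree C(m,2) = m(m−1)/2, i.e., E_m(q) = q^{m(m−1)/2} · E_m(1/q). -/
open Polynomial Finset

noncomputable section

/-- `E_m(q) = Σ q^{ℓ(w)}` over alternating permutations `w ∈ 𝔖_m`,
i.e. `w(1) < w(2) > w(3) < ⋯` in one-line notation. -/
def Epoly (m : ℕ) : Polynomial ℝ :=
  ∑ w ∈ Finset.univ.filter (fun w : Equiv.Perm (Fin m) =>
      ∀ a b : Fin m, (a : ℕ) + 1 = (b : ℕ) →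
        ((Even (a : ℕ) → w a < w b) ∧ (¬ Even (a : ℕ) → w b < w a))),
    X ^ invNum w

lemma card_lt_pairs (m : ℕ) :
    (univ.filter fun p : Fin m × Fin m => p.1 < p.2).card = m * (m - 1) / 2 := by
  rw [Finset.card_filter]
  rw [Fintype.sum_prod_type]
  rw [Finset.sum_comm]
  have : ∀ j : Fin m, (∑ i : Fin m, if i < j then (1:ℕ) else 0) = (j : ℕ) := by
    intro j
    rw [← Finset.card_filter]
    have : (univ.filter fun i : Fin m => i < j) = Finset.Iio j := by
      ext i; simp
    rw [this, Fin.card_Iio]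
  simp_rw [this]
  rw [Fin.sum_univ_eq_sum_range (fun j => j)]
  exact Finset.sum_range_id m

lemma inv_add (m : ℕ) (w : Equiv.Perm (Fin m)) :
    invNum (Fin.revPerm.trans w) + invNum w = m * (m - 1) / 2 := by
  have h1 : invNum (Fin.revPerm.trans w)
      = (univ.filter fun p : Fin m × Fin m => p.1 < p.2 ∧ w p.1 < w p.2).card := by
    unfold invNum
    refine Finset.card_bij' (fun p _ => (p.2.rev, p.1.rev)) (fun p _ => (p.2.rev, p.1.rev)) ?_ ?_ ?_ ?_
    · intro p hp
      simp only [mem_filter, mem_univ, true_and, Equiv.trans_apply, Fin.revPerm_apply,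
        Fin.rev_rev, Fin.rev_lt_rev] at hp ⊢
      exact hp
    · intro p hp
      simp only [mem_filter, mem_univ, true_and, Equiv.trans_apply, Fin.revPerm_apply,
        Fin.rev_rev, Fin.rev_lt_rev] at hp ⊢
      exact hp
    · intro p _; simp [Fin.rev_rev]
    · intro p _; simp [Fin.rev_rev]
  rw [h1]
  unfold invNum
  have hdisj : Disjoint
      (univ.filter fun p : Fin m × Fin m => p.1 < p.2 ∧ w p.1 < w p.2)
      (univ.filter fun p : Fin m × Fin m => p.1 < p.2 ∧ w p.2 < w p.1) := by
    rw [Finset.disjoint_left]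
    rintro p hp1 hp2
    simp only [mem_filter] at hp1 hp2
    exact absurd hp1.2.2 (not_lt.mpr hp2.2.2.le)
  rw [← Finset.card_union_of_disjoint hdisj, ← card_lt_pairs m]
  congr 1
  rw [← Finset.filter_or]
  apply Finset.filter_congr
  intro p _
  constructor
  · rintro (⟨h, _⟩ | ⟨h, _⟩) <;> exact h
  · intro h
    rcases lt_or_gt_of_ne (fun he : w p.1 = w p.2 => (ne_of_lt h) (w.injective he)) with h2 | h2
    · exact Or.inl ⟨h, h2⟩
    · exact Or.inr ⟨h, h2⟩

def IsAlt {m : ℕ} (w : Equiv.Perm (Fin m)) : Prop :=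
  ∀ a b : Fin m, (a : ℕ) + 1 = (b : ℕ) →
    ((Even (a : ℕ) → w a < w b) ∧ (¬ Even (a : ℕ) → w b < w a))

lemma alt_rev {m : ℕ} (hodd : Odd m) {w : Equiv.Perm (Fin m)} (hw : IsAlt w) :
    IsAlt (Fin.revPerm.trans w) := by
  intro a b hab
  obtain ⟨k, hk⟩ := hodd
  have ha : (a : ℕ) < m := a.isLt
  have hb : (b : ℕ) < m := b.isLt
  have h1 : ((b.rev : Fin m) : ℕ) + 1 = ((a.rev : Fin m) : ℕ) := by
    simp only [Fin.val_rev]; omega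
  have h2 := hw b.rev a.rev h1
  have hpar : Even ((b.rev : Fin m) : ℕ) ↔ ¬ Even (a : ℕ) := by
    simp only [Fin.val_rev, Nat.even_iff, Nat.not_even_iff]
    omega
  simp only [Equiv.trans_apply, Fin.revPerm_apply]
  constructor
  · intro hEa
    exact h2.2 (fun h => (hpar.mp h) hEa)
  · intro hEa
    exact h2.1 (hpar.mpr hEa)


/-- for odd `m ≥ 1`, `E_m(q)` is palindromic in degree `C(m,2) = m(m-1)/2`,
i.e. `E_m(q) = q^{m(m-1)/2} E_m(1/q)`. -/
theorem stmt17 (m : ℕ) (hm : 1 ≤ m) (hodd : Odd m) (q : ℝ) (hq : q ≠ 0) :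
    (Epoly m).eval q = q ^ (m * (m - 1) / 2) * (Epoly m).eval q⁻¹ := by
  unfold Epoly
  rw [Polynomial.eval_finset_sum, Polynomial.eval_finset_sum, Finset.mul_sum]
  simp only [Polynomial.eval_pow, Polynomial.eval_X]
  refine Finset.sum_nbij' (fun w => Fin.revPerm.trans w) (fun w => Fin.revPerm.trans w)
    ?_ ?_ ?_ ?_ ?_
  · intro w hw
    simp only [mem_filter, mem_univ, true_and] at hw ⊢
    exact alt_rev hodd hw
  · intro w hw
    simp only [mem_filter, mem_univ, true_and] at hw ⊢
    exact alt_rev hodd hw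
  · intro w _
    ext x
    simp
  · intro w _
    ext x
    simp
  · intro w _
    have h := inv_add m w
    have hN : q ^ (m * (m - 1) / 2) = q ^ invNum (Fin.revPerm.trans w) * q ^ invNum w := by
      rw [← pow_add, h]
    rw [hN]
    field_simp
    rw [← mul_pow, mul_one_div_cancel hq, one_pow]


end
end

section
/- Let n ≥ 1 and let S = {s_1 < ⋯ < s_r} be a nonempty finite set of positive integers. Then there exists π ∈ S_n with Peak(π) = S if and only if s_1 > 1, s_{i+1} > s_i + 1 for all 1 ≤ i ≤ r−1, and s_r ≤ n − 1. -/
open Polynomial Finset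

noncomputable section

lemma mem_peakSet_iff {n : ℕ} (π : Equiv.Perm (Fin n)) (m : ℕ) :
    m ∈ PeakSet π ↔ ∃ a b c : Fin n, (a : ℕ) + 1 = (b : ℕ) ∧ (b : ℕ) + 1 = (c : ℕ) ∧
      (b : ℕ) + 1 = m ∧ π a < π b ∧ π c < π b := by
  simp only [PeakSet, Finset.mem_image, Finset.mem_filter, Finset.mem_univ, true_and]
  constructor
  · rintro ⟨b, ⟨a, c, h1, h2, h3, h4⟩, h5⟩
    exact ⟨a, b, c, h1, h2, h5, h3, h4⟩
  · rintro ⟨a, b, c, h1, h2, h5, h3, h4⟩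
    exact ⟨b, ⟨a, c, h1, h2, h3, h4⟩, h5⟩

/-- key function for the construction -/
def peakKey (n : ℕ) (S : Finset ℕ) (i : Fin n) : ℕ :=
  (if ((i : ℕ) + 1) ∈ S then n else 0) + (i : ℕ)

lemma peakKey_injective (n : ℕ) (S : Finset ℕ) : Function.Injective (peakKey n S) := by
  intro i j h
  unfold peakKey at h
  split_ifs at h with h1 h2 h2 <;>
  · first
    | (exact Fin.ext (by omega))
    | (exfalso; have := i.isLt; have := j.isLt; omega)

/-- There is a permutation whose order agrees with any injective key. -/
lemma exists_perm_of_key {n : ℕ} (k : Fin n → ℕ) (hk : Function.Injective k) :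
    ∃ π : Equiv.Perm (Fin n), ∀ i j : Fin n, π i < π j ↔ k i < k j := by
  classical
  set T : Finset ℕ := Finset.univ.image k with hT
  have hcard : T.card = n := by
    rw [hT, Finset.card_image_of_injective _ hk, Finset.card_univ, Fintype.card_fin]
  have hmem : ∀ i : Fin n, k i ∈ T := fun i => Finset.mem_image_of_mem _ (Finset.mem_univ i)
  let f : Fin n → T := fun i => ⟨k i, hmem i⟩
  have hf : Function.Injective f := fun i j h => hk (Subtype.ext_iff.mp h)
  have hbij : Function.Bijective f :=
    (Fintype.bijective_iff_injective_and_card f).2 ⟨hf, by simp [Fintype.card_coe, hcard]⟩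
  let e : Fin n ≃ T := Equiv.ofBijective f hbij
  let iso := T.orderIsoOfFin hcard
  refine ⟨e.trans iso.symm.toEquiv, fun i j => ?_⟩
  have : ∀ i : Fin n, (e.trans iso.symm.toEquiv) i = iso.symm (f i) := fun i => rfl
  rw [this i, this j, iso.symm.lt_iff_lt]
  exact Iff.rfl

/-- a nonempty finite set `S` of positive integers is the peak set of some
permutation in `𝔖_n` iff `min S > 1`, consecutive elements of `S` differ by more than 1,
and `max S ≤ n - 1`. -/
theorem stmt18 (n : ℕ) (hn : 1 ≤ n) (S : Finset ℕ) (hS : S.Nonempty)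
    (hpos : ∀ s ∈ S, 0 < s) :
    (∃ π : Equiv.Perm (Fin n), PeakSet π = S) ↔
      (1 < S.min' hS ∧ (∀ x ∈ S, ∀ y ∈ S, x < y → x + 1 < y) ∧ S.max' hS ≤ n - 1) := by
  constructor
  · rintro ⟨π, rfl⟩
    refine ⟨?_, ?_, ?_⟩
    · obtain ⟨a, b, c, h1, h2, h3, _, _⟩ :=
        (mem_peakSet_iff π _).1 (Finset.min'_mem _ hS)
      omega
    · intro x hx y hy hxy
      obtain ⟨a, b, c, h1, h2, h3, h4, h5⟩ := (mem_peakSet_iff π _).1 hx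
      obtain ⟨a', b', c', h1', h2', h3', h4', h5'⟩ := (mem_peakSet_iff π _).1 hy
      by_contra hcon
      have hyx : y = x + 1 := by omega
      have hbc : b' = c := Fin.ext (by omega)
      have hab : a' = b := Fin.ext (by omega)
      rw [hbc, hab] at h4'
      exact absurd h4' (not_lt.2 h5.le)
    · obtain ⟨a, b, c, h1, h2, h3, _, _⟩ := (mem_peakSet_iff π _).1 (Finset.max'_mem _ hS)
      have := c.isLt
      omega
  · rintro ⟨hmin, hgap, hmax⟩
    obtain ⟨π, hπ⟩ := exists_perm_of_key (peakKey n S) (peakKey_injective n S)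
    refine ⟨π, ?_⟩
    ext m
    rw [mem_peakSet_iff]
    constructor
    · rintro ⟨a, b, c, h1, h2, h3, h4, h5⟩
      rw [hπ] at h4 h5
      by_contra hm
      have hb : ((b : ℕ) + 1) ∈ S → False := fun h => hm (h3 ▸ h)
      have hbkey : peakKey n S b = (b : ℕ) := by
        unfold peakKey; rw [if_neg (fun h => hb h)]; omega
      have hckey : (c : ℕ) ≤ peakKey n S c := by unfold peakKey; split_ifs <;> omega
      rw [hbkey] at h5
      omega
    · intro hm
      have hm1 : 1 < m := lt_of_lt_of_le hmin (S.min'_le _ hm)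
      have hmn : m ≤ n - 1 := le_trans (S.le_max' _ hm) hmax
      have hn3 : m < n := by omega
      refine ⟨⟨m - 2, by omega⟩, ⟨m - 1, by omega⟩, ⟨m, hn3⟩, by simp; omega, by simp; omega,
        by simp; omega, ?_, ?_⟩
      · rw [hπ]
        have hnot : (m - 2 : ℕ) + 1 ∉ S := by
          intro h
          have := hgap _ h _ hm (by omega)
          omega
        have hmm : (m - 1 : ℕ) + 1 ∈ S := by rwa [Nat.sub_add_cancel (by omega)]
        unfold peakKey
        simp only [Fin.val_mk]
        rw [if_neg hnot, if_pos hmm]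
        omega
      · rw [hπ]
        have hnot : (m : ℕ) + 1 ∉ S := by
          intro h
          have := hgap _ hm _ h (by omega)
          omega
        have hmm : (m - 1 : ℕ) + 1 ∈ S := by rwa [Nat.sub_add_cancel (by omega)]
        unfold peakKey
        simp only [Fin.val_mk]
        rw [if_neg hnot, if_pos hmm]
        omega

end
end
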